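/- Let A, B, C be groups with monomorphisms φ : C → A and ψ : C → B, and let G = A ∗_C B be the amalgamated free product with respect to these monomorphisms. Let T_A = A ∖ φ(C) and T_B = B ∖ ψ(C). Suppose w = g₀ g₁ ⋯ gₙ with n ≥ 1, where each gᵢ lies in (the canonical image in G of) A or B, and for all 1 ≤ i ≤ n: if gᵢ₋₁ ∈ A then gᵢ ∈ T_B, and if gᵢ₋₁ ∈ B then gᵢ ∈ T_A. Then w ≠ 1 in A ∗_C B. -/

import Mathlib

open Monoid

/-- A nonempty alternating word with letters outside the images of the base group
has product outside the image of the base group. -/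
theorem amalgam_aux {C : Type*} [Group C]
    {Gf : Bool → Type*} [∀ b, Group (Gf b)]
    (φ : ∀ b, C →* Gf b) (hφ : ∀ b, Function.Injective (φ b))
    (l : List ((b : Bool) × Gf b)) (hne : l ≠ [])
    (hch : l.Chain' (fun p q => p.1 ≠ q.1))
    (hr : ∀ p ∈ l, p.2 ∉ (φ p.1).range) :
    (l.map fun p => PushoutI.of (φ := φ) p.1 p.2).prod ∉ (PushoutI.base φ).range := by
  intro h
  have hone : ∀ p ∈ l, p.2 ≠ 1 := fun p hp h1 => hr p hp (h1 ▸ one_mem _)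
  let w : CoprodI.Word Gf := ⟨l, hone, hch⟩
  have hred : PushoutI.Reduced φ w := hr
  have hprod : PushoutI.ofCoprodI (φ := φ) w.prod
      = (l.map fun p => PushoutI.of (φ := φ) p.1 p.2).prod := by
    rw [CoprodI.Word.prod, map_list_prod, List.map_map]
    exact congrArg List.prod
      (List.map_congr_left fun p _ => PushoutI.ofCoprodI_of p.1 p.2)
  have hempty : w = .empty := hred.eq_empty_of_mem_range hφ (by rw [hprod]; exact h)
  have : l = [] := congrArg CoprodI.Word.toList hempty
  exact hne this

/-- (Britton's Lemma analogue for amalgamated free products.)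
Let `A = Gf true` and `B = Gf false` be groups with monomorphisms `φ true : C → A`,
`φ false : C → B`, and let `G = A ∗_C B` be the amalgamated free product (the pushout
`Monoid.PushoutI φ`).  Suppose `w = g₀ g₁ ⋯ gₙ` with `n ≥ 1`, where `g₀` lies in the
canonical image of `A` or of `B`, and for all `1 ≤ i ≤ n`: if `g_{i-1}` lies in the image
of `A` then `gᵢ` lies in the image of `T_B = B \ (φ false)(C)`, and if `g_{i-1}` lies in
the image of `B` then `gᵢ` lies in the image of `T_A = A \ (φ true)(C)`.
Then `w ≠ 1` in `A ∗_C B`. -/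
theorem amalgam_reduced_word_ne_one {C : Type*} [Group C]
    {Gf : Bool → Type*} [∀ b, Group (Gf b)]
    (φ : ∀ b, C →* Gf b) (hφ : ∀ b, Function.Injective (φ b))
    (n : ℕ) (hn : 1 ≤ n) (g : Fin (n + 1) → PushoutI φ)
    (h0 : g 0 ∈ Set.range (PushoutI.of (φ := φ) true) ∪
      Set.range (PushoutI.of (φ := φ) false))
    (hstep : ∀ i : Fin n,
      (g i.castSucc ∈ Set.range (PushoutI.of (φ := φ) true) →
        g i.succ ∈ (PushoutI.of (φ := φ) false) '' (Set.range (φ false))ᶜ) ∧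
      (g i.castSucc ∈ Set.range (PushoutI.of (φ := φ) false) →
        g i.succ ∈ (PushoutI.of (φ := φ) true) '' (Set.range (φ true))ᶜ)) :
    (List.ofFn g).prod ≠ 1 := by
  classical
  -- choose the side of g 0
  obtain ⟨b₀, hb₀⟩ : ∃ b₀, g 0 ∈ Set.range (PushoutI.of (φ := φ) b₀) := by
    rcases h0 with h | h
    · exact ⟨true, h⟩
    · exact ⟨false, h⟩
  -- the alternating sequence of sides
  set b : ℕ → Bool := fun k => if k % 2 = 0 then b₀ else !b₀ with hbdef
  have hbsucc : ∀ k, b (k + 1) = !(b k) := by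
    intro k
    rcases Nat.even_or_odd k with hk | hk
    · have h1 : k % 2 = 0 := Nat.even_iff.mp hk
      have h2 : (k + 1) % 2 = 1 := by omega
      simp [hbdef, h1, h2]
    · have h1 : k % 2 = 1 := Nat.odd_iff.mp hk
      have h2 : (k + 1) % 2 = 0 := by omega
      simp [hbdef, h1, h2]
  -- the main claim, by induction
  have claim : ∀ k (hk : k < n + 1),
      g ⟨k, hk⟩ ∈ Set.range (PushoutI.of (φ := φ) (b k)) ∧
      (0 < k → g ⟨k, hk⟩ ∈ PushoutI.of (φ := φ) (b k) '' (Set.range (φ (b k)))ᶜ) := by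
    intro k
    induction k with
    | zero =>
      intro hk
      refine ⟨?_, by omega⟩
      have : b 0 = b₀ := by simp [hbdef]
      rw [this]
      exact hb₀
    | succ k ih =>
      intro hk
      have hk' : k < n + 1 := by omega
      have hkn : k < n := by omega
      have hprev := (ih hk').1
      have hcast : (⟨k, hkn⟩ : Fin n).castSucc = ⟨k, hk'⟩ := rfl
      have hsuc : (⟨k, hkn⟩ : Fin n).succ = ⟨k + 1, hk⟩ := rfl
      have hnext : g ⟨k + 1, hk⟩ ∈
          PushoutI.of (φ := φ) (!(b k)) '' (Set.range (φ (!(b k))))ᶜ := by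
        rcases hb : b k with _ | _
        · rw [hb] at hprev
          have := (hstep ⟨k, hkn⟩).2 (by rwa [hcast])
          rw [hsuc] at this
          exact this
        · rw [hb] at hprev
          have := (hstep ⟨k, hkn⟩).1 (by rwa [hcast])
          rw [hsuc] at this
          exact this
      rw [← hbsucc] at hnext
      refine ⟨?_, fun _ => hnext⟩
      rcases hnext with ⟨x, _, hx⟩
      exact ⟨x, hx⟩
  -- choose representatives
  have hmem : ∀ i : Fin (n + 1), ∃ x, PushoutI.of (φ := φ) (b i.val) x = g i := by
    intro i
    have := (claim i.val i.isLt).1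
    simpa using this
  choose a ha using hmem
  have hnotr : ∀ i : Fin (n + 1), 0 < i.val → a i ∉ (φ (b i.val)).range := by
    intro i hi hmemr
    obtain ⟨x, hx, hxe⟩ := (claim i.val i.isLt).2 hi
    have : a i = x := PushoutI.of_injective hφ (b i.val) (by rw [ha i]; exact hxe.symm)
    exact hx (this ▸ hmemr)
  have hbne : ∀ k, b k ≠ b (k + 1) := by
    intro k
    rw [hbsucc]
    cases b k <;> simp
  intro hone
  by_cases h0base : a 0 ∈ (φ (b 0)).range
  · -- g 0 is a base element; consider the tail word
    obtain ⟨c, hc⟩ := h0base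
    have hg0 : g 0 = PushoutI.base φ c := by
      rw [← ha 0]
      show PushoutI.of (φ := φ) (b 0) (a 0) = _
      rw [← hc, PushoutI.of_apply_eq_base]
    have htail : (List.ofFn (fun j : Fin n => g j.succ)).prod = PushoutI.base φ c⁻¹ := by
      have := hone
      rw [List.ofFn_succ, List.prod_cons, hg0] at this
      have h2 : (List.ofFn fun i : Fin n => g i.succ).prod = (PushoutI.base φ c)⁻¹ :=
        (inv_eq_of_mul_eq_one_right this).symm
      rw [h2, ← map_inv]
    refine amalgam_aux φ hφ
      (List.ofFn (fun j : Fin n => ⟨b (j.val + 1), a j.succ⟩)) ?_ ?_ ?_ ?_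
    · intro h
      have := congrArg List.length h
      simp at this
      omega
    · refine List.isChain_ofFn.mpr ?_
      intro i hi
      exact fun hc => hbne (i + 1) hc
    · intro p hp
      rw [List.mem_ofFn] at hp
      obtain ⟨j, rfl⟩ := hp
      exact hnotr j.succ (by simp)
    · rw [List.map_ofFn]
      have : ((fun p : (b : Bool) × Gf b => PushoutI.of (φ := φ) p.1 p.2) ∘
          fun j : Fin n => (⟨b (j.val + 1), a j.succ⟩ : (b : Bool) × Gf b)) =
          fun j : Fin n => g j.succ := by
        funext j
        exact ha j.succ
      rw [this, htail]
      exact ⟨c⁻¹, rfl⟩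
  · -- the whole word is reduced
    refine amalgam_aux φ hφ
      (List.ofFn (fun i : Fin (n + 1) => ⟨b i.val, a i⟩)) ?_ ?_ ?_ ?_
    · intro h
      have := congrArg List.length h
      simp at this
    · refine List.isChain_ofFn.mpr ?_
      intro i hi
      exact fun hc => hbne i hc
    · intro p hp
      rw [List.mem_ofFn] at hp
      obtain ⟨j, rfl⟩ := hp
      rcases Nat.eq_zero_or_pos j.val with hj | hj
      · have : j = 0 := Fin.ext hj
        subst this
        exact h0base
      · exact hnotr j hj
    · rw [List.map_ofFn]
      have : ((fun p : (b : Bool) × Gf b => PushoutI.of (φ := φ) p.1 p.2) ∘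
          fun i : Fin (n + 1) => (⟨b i.val, a i⟩ : (b : Bool) × Gf b)) = g := by
        funext i
        exact ha i
      rw [this, hone]
      exact ⟨1, by simp⟩
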